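/- In the Poincaré ball model (𝔹^{n+1}, ḡ = 4/(1−|x|²)² δ) of hyperbolic space, for each constant vector a ∈ ℝ^{n+1} and radius parameter R_ℝ ∈ (0,1), the vector field X_a = (2/(1−R_ℝ²))(⟨x,a⟩x − ½(|x|²+R_ℝ²)a) is conformal Killing with conformal factor V_a = 2⟨x,a⟩/(1−|x|²): ½(∇̄_i (X_a)_j + ∇̄_j (X_a)_i) = V_a ḡ_{ij}. -/

import Mathlib

noncomputable section PoincareBall

variable {m : ℕ}

/-- The Euclidean gradient of the conformal factor exponent `u = log(2/(1−|y|²))` of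
the Poincaré ball metric `ḡ = e^{2u} δ`, namely `∇u = 2y/(1−|y|²)`. -/
def pbGradU (y : EuclideanSpace ℝ (Fin m)) : EuclideanSpace ℝ (Fin m) :=
  (2 / (1 - ‖y‖ ^ 2)) • y

/-- The hyperbolic (Poincaré ball) metric `ḡ = 4/(1−|y|²)² δ` evaluated on two vectors. -/
def pbMetric (y v w : EuclideanSpace ℝ (Fin m)) : ℝ :=
  (4 / (1 - ‖y‖ ^ 2) ^ 2) * (inner ℝ v w : ℝ)

/-- The Levi-Civita covariant derivative `∇̄_Z W` of the Poincaré ball metric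
`ḡ = e^{2u} δ`, given by the standard conformal change formula
`∇̄_Z W = D_Z W + du(Z) W + du(W) Z − ⟨Z,W⟩ ∇u`. -/
def pbConn (W : EuclideanSpace ℝ (Fin m) → EuclideanSpace ℝ (Fin m))
    (y Z : EuclideanSpace ℝ (Fin m)) : EuclideanSpace ℝ (Fin m) :=
  fderiv ℝ W y Z + (inner ℝ (pbGradU y) Z : ℝ) • W y + (inner ℝ (pbGradU y) (W y) : ℝ) • Z
    - (inner ℝ Z (W y) : ℝ) • pbGradU y

/-- The hyperbolic Hessian `∇̄²V(Z,W) = Z(W(V)) − dV(∇̄_Z W)` for constant directions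
`Z, W`. -/
def pbHess (V : EuclideanSpace ℝ (Fin m) → ℝ) (y Z W : EuclideanSpace ℝ (Fin m)) : ℝ :=
  fderiv ℝ (fun z => fderiv ℝ V z W) y Z - fderiv ℝ V y (pbConn (fun _ => W) y Z)

/-- The function `V_a = 2⟨x,a⟩/(1−|x|²)` on the Poincaré ball. -/
def pbVa (a y : EuclideanSpace ℝ (Fin m)) : ℝ :=
  2 * (inner ℝ y a : ℝ) / (1 - ‖y‖ ^ 2)

end PoincareBall

set_option maxHeartbeats 1000000 in
/-- in the Poincaré ball model, for `R_ℝ ∈ (0,1)` the vector field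
`X_a = (2/(1−R_ℝ²)) (⟨x,a⟩ x − ½(|x|²+R_ℝ²) a)` is conformal Killing for the
hyperbolic metric with conformal factor `V_a = 2⟨x,a⟩/(1−|x|²)`:
`½(∇̄_i (X_a)_j + ∇̄_j (X_a)_i) = V_a ḡ_{ij}`. -/
theorem pb_Xa_conformal_Killing {m : ℕ} (a y : EuclideanSpace ℝ (Fin m)) (hy : ‖y‖ < 1)
    (R : ℝ) (hR0 : 0 < R) (hR1 : R < 1) (i j : Fin m) :
    (1 / 2 : ℝ) *
        (pbMetric y (pbConn (fun z => (2 / (1 - R ^ 2)) •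
              ((inner ℝ z a : ℝ) • z - ((‖z‖ ^ 2 + R ^ 2) / 2) • a)) y
            (EuclideanSpace.single i 1)) (EuclideanSpace.single j 1)
          + pbMetric y (pbConn (fun z => (2 / (1 - R ^ 2)) •
              ((inner ℝ z a : ℝ) • z - ((‖z‖ ^ 2 + R ^ 2) / 2) • a)) y
            (EuclideanSpace.single j 1)) (EuclideanSpace.single i 1))
      = pbVa a y * pbMetric y (EuclideanSpace.single i 1) (EuclideanSpace.single j 1) := by
  have ht : (1:ℝ) - ‖y‖ ^ 2 ≠ 0 := by nlinarith [norm_nonneg y]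
  have hRt : (1:ℝ) - R ^ 2 ≠ 0 := by nlinarith
  have hkey : ∀ Z, fderiv ℝ (fun z : EuclideanSpace ℝ (Fin m) => (2 / (1 - R ^ 2)) •
        ((inner ℝ z a : ℝ) • z - ((‖z‖ ^ 2 + R ^ 2) / 2) • a)) y Z
      = (2 / (1 - R ^ 2)) • ((inner ℝ Z a : ℝ) • y + (inner ℝ y a : ℝ) • Z
          - (inner ℝ y Z : ℝ) • a) := by
    have h1 : HasFDerivAt (fun z : EuclideanSpace ℝ (Fin m) => (inner ℝ z a : ℝ))
        ((fderivInnerCLM ℝ (y, a)).comp ((ContinuousLinearMap.id ℝ _).prod 0)) y :=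
      (hasFDerivAt_id y).inner ℝ (hasFDerivAt_const a y)
    have h2 : HasFDerivAt (fun z : EuclideanSpace ℝ (Fin m) => (inner ℝ z z : ℝ))
        ((fderivInnerCLM ℝ (y, y)).comp
          ((ContinuousLinearMap.id ℝ _).prod (ContinuousLinearMap.id ℝ _))) y :=
      (hasFDerivAt_id y).inner ℝ (hasFDerivAt_id y)
    have hA := h1.smul (hasFDerivAt_id y)
    have hB := ((h2.add_const (R ^ 2)).mul_const (1/2 : ℝ)).smul (hasFDerivAt_const a y)
    have hF := ((hA.sub hB).const_smul (2 / (1 - R ^ 2)))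
    have hF' : HasFDerivAt (fun z : EuclideanSpace ℝ (Fin m) => (2 / (1 - R ^ 2)) •
        ((inner ℝ z a : ℝ) • z - (((inner ℝ z z : ℝ) + R ^ 2) * (1/2)) • a)) _ y := hF
    have hfun : (fun z : EuclideanSpace ℝ (Fin m) => (2 / (1 - R ^ 2)) •
        ((inner ℝ z a : ℝ) • z - ((‖z‖ ^ 2 + R ^ 2) / 2) • a)) =
        (fun z : EuclideanSpace ℝ (Fin m) => (2 / (1 - R ^ 2)) •
        ((inner ℝ z a : ℝ) • z - (((inner ℝ z z : ℝ) + R ^ 2) * (1/2)) • a)) := by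
      funext z; rw [real_inner_self_eq_norm_sq, div_eq_mul_one_div (‖z‖ ^ 2 + R ^ 2) 2]
    rw [hfun]
    intro Z
    rw [hF'.fderiv]
    simp [fderivInnerCLM_apply, real_inner_comm y Z]
    module
  simp only [pbConn, pbMetric, pbVa, pbGradU, hkey]
  simp only [inner_add_left, inner_add_right, inner_sub_left, inner_sub_right,
    real_inner_smul_left, real_inner_smul_right, real_inner_self_eq_norm_sq,
    EuclideanSpace.inner_single_left, EuclideanSpace.inner_single_right,
    map_one, conj_trivial, one_mul, mul_one, PiLp.smul_apply, PiLp.add_apply,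
    PiLp.sub_apply, smul_eq_mul]
  rw [real_inner_comm a y]
  rcases eq_or_ne i j with h | h
  · subst h
    simp only [EuclideanSpace.single_apply, if_pos rfl]
    field_simp
    ring
  · simp only [EuclideanSpace.single_apply, if_neg (Ne.symm h), if_neg h]
    field_simp
    ring
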